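/- If the substitution instance M[N/x] converges but N diverges, then M[N'/x] converges for every closed program N' of the same type. -/

import Mathlib

/-!  A formalization of the meta-programming language PCF_dp (Davies–Pfenning style
quasi-quotation over call-by-value PCF), with small-step reduction, typing with a
modal context, contexts, contextual (pre)congruence, models, and a shallow
semantics for the program logic's formulae and judgements. -/

namespace PCFdp

/-- Types of PCF_dp: base types, functions, and code types `⟨α⟩`. -/
inductive Ty : Type
  | unit | bool | int
  | arrow (a b : Ty)
  | code (a : Ty)
deriving DecidableEq

/-- Terms of PCF_dp. `quote M` is the quasi-quote `⟨M⟩`, and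
`letq x M N` is `let ⟨x⟩ = M in N`. `fix g x α β M` is `μg.λx^α.M`. -/
inductive Tm : Type
  | var (x : ℕ)
  | cunit
  | cbool (b : Bool)
  | cint (n : ℤ)
  | lam (x : ℕ) (α : Ty) (M : Tm)
  | fix (g x : ℕ) (α β : Ty) (M : Tm)
  | app (M N : Tm)
  | add (M N : Tm)
  | ifte (M N N' : Tm)
  | quote (M : Tm)
  | letq (x : ℕ) (M N : Tm)
deriving DecidableEq

/-- Values: constants, abstractions, recursive abstractions, and all quasi-quotes. -/
inductive IsValue : Tm → Prop
  | cunit : IsValue .cunit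
  | cbool (b) : IsValue (.cbool b)
  | cint (n) : IsValue (.cint n)
  | lam (x α M) : IsValue (.lam x α M)
  | fix (g x α β M) : IsValue (.fix g x α β M)
  | quote (M) : IsValue (.quote M)

/-- Substitution `M[N/x]` (substituted terms are closed in all uses below). -/
def subst (x : ℕ) (N : Tm) : Tm → Tm
  | .var y => if y = x then N else .var y
  | .cunit => .cunit
  | .cbool b => .cbool b
  | .cint n => .cint n
  | .lam y α M => if y = x then .lam y α M else .lam y α (subst x N M)
  | .fix g y α β M => if g = x ∨ y = x then .fix g y α β M else .fix g y α β (subst x N M)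
  | .app M M' => .app (subst x N M) (subst x N M')
  | .add M M' => .add (subst x N M) (subst x N M')
  | .ifte M M₁ M₂ => .ifte (subst x N M) (subst x N M₁) (subst x N M₂)
  | .quote M => .quote (subst x N M)
  | .letq y M M' => .letq y (subst x N M) (if y = x then M' else subst x N M')

/-- Call-by-value small-step reduction, with the redexes of PCF plus
`let ⟨x⟩ = ⟨M⟩ in N → N[M/x]`, closed under evaluation contexts. -/
inductive Step : Tm → Tm → Prop
  | beta {x α M V} : IsValue V → Step (.app (.lam x α M) V) (subst x V M)
  | betaFix {g x α β M V} : IsValue V →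
      Step (.app (.fix g x α β M) V) (subst x V (subst g (.fix g x α β M) M))
  | iteT {N N'} : Step (.ifte (.cbool true) N N') N
  | iteF {N N'} : Step (.ifte (.cbool false) N N') N'
  | addC {m n} : Step (.add (.cint m) (.cint n)) (.cint (m + n))
  | letqQ {x M N} : Step (.letq x (.quote M) N) (subst x M N)
  | appL {M M' N} : Step M M' → Step (.app M N) (.app M' N)
  | appR {V N N'} : IsValue V → Step N N' → Step (.app V N) (.app V N')
  | addL {M M' N} : Step M M' → Step (.add M N) (.add M' N)
  | addR {V N N'} : IsValue V → Step N N' → Step (.add V N) (.add V N')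
  | ifteC {M M' N N'} : Step M M' → Step (.ifte M N N') (.ifte M' N N')
  | letqL {x M M' N} : Step M M' → Step (.letq x M N) (.letq x M' N)

/-- Many-step reduction `→*`. -/
def Steps : Tm → Tm → Prop := Relation.ReflTransGen Step

/-- `M ⇓ V`: evaluation to a value. -/
def Evals (M V : Tm) : Prop := Steps M V ∧ IsValue V

/-- `M ⇓`: convergence. -/
def Conv (M : Tm) : Prop := ∃ V, Evals M V

/-- `M ⇑`: divergence. -/
def Div (M : Tm) : Prop := ¬ Conv M

/-- Typing environments: partial maps from variables to types. -/
def Env : Type := ℕ → Option Ty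
def Env.empty : Env := fun _ => none
def Env.update (Γ : Env) (x : ℕ) (α : Ty) : Env := fun y => if y = x then some α else Γ y

/-- The typing judgement `Γ; Δ ⊢ M : α` with non-modal context `Γ` and modal
context `Δ`.  Free variables of quasi-quoted code must be modal; unquote binds
a modal variable. -/
inductive Types : Env → Env → Tm → Ty → Prop
  | varN {Γ Δ : Env} {x α} : Γ x = some α → Types Γ Δ (.var x) α
  | varM {Γ Δ : Env} {x α} : Δ x = some α → Types Γ Δ (.var x) α
  | cunit {Γ Δ} : Types Γ Δ .cunit .unit
  | cbool {Γ Δ b} : Types Γ Δ (.cbool b) .bool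
  | cint {Γ Δ n} : Types Γ Δ (.cint n) .int
  | lam {Γ Δ x α β M} : Types (Env.update Γ x α) Δ M β → Types Γ Δ (.lam x α M) (.arrow α β)
  | fix {Γ Δ g x α β M} :
      Types (Env.update (Env.update Γ g (.arrow α β)) x α) Δ M β →
      Types Γ Δ (.fix g x α β M) (.arrow α β)
  | app {Γ Δ M N α β} : Types Γ Δ M (.arrow α β) → Types Γ Δ N α → Types Γ Δ (.app M N) β
  | add {Γ Δ M N} : Types Γ Δ M .int → Types Γ Δ N .int → Types Γ Δ (.add M N) .int
  | ifte {Γ Δ M N N' α} : Types Γ Δ M .bool → Types Γ Δ N α → Types Γ Δ N' α →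
      Types Γ Δ (.ifte M N N') α
  | quote {Γ Δ M α} : Types Env.empty Δ M α → Types Γ Δ (.quote M) (.code α)
  | letq {Γ Δ x M N α β} : Types Γ Δ M (.code α) → Types Γ (Env.update Δ x α) N β →
      Types Γ Δ (.letq x M N) β

/-- `M` is a closed program of type `α`. -/
def Closed (M : Tm) (α : Ty) : Prop := Types Env.empty Env.empty M α

/-- Term contexts (terms with one hole). -/
inductive Ctx : Type
  | hole
  | lamC (x : ℕ) (α : Ty) (C : Ctx)
  | fixC (g x : ℕ) (α β : Ty) (C : Ctx)
  | appL (C : Ctx) (N : Tm)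
  | appR (M : Tm) (C : Ctx)
  | addL (C : Ctx) (N : Tm)
  | addR (M : Tm) (C : Ctx)
  | ifteC (C : Ctx) (N N' : Tm)
  | ifteL (M : Tm) (C : Ctx) (N' : Tm)
  | ifteR (M N : Tm) (C : Ctx)
  | quoteC (C : Ctx)
  | letqL (x : ℕ) (C : Ctx) (N : Tm)
  | letqR (x : ℕ) (M : Tm) (C : Ctx)

/-- Plugging a term into a context. -/
def Ctx.plug : Ctx → Tm → Tm
  | .hole, M => M
  | .lamC x α C, M => .lam x α (C.plug M)
  | .fixC g x α β C, M => .fix g x α β (C.plug M)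
  | .appL C N, M => .app (C.plug M) N
  | .appR L C, M => .app L (C.plug M)
  | .addL C N, M => .add (C.plug M) N
  | .addR L C, M => .add L (C.plug M)
  | .ifteC C N N', M => .ifte (C.plug M) N N'
  | .ifteL L C N', M => .ifte L (C.plug M) N'
  | .ifteR L N C, M => .ifte L N (C.plug M)
  | .quoteC C, M => .quote (C.plug M)
  | .letqL x C N, M => .letq x (C.plug M) N
  | .letqR x L C, M => .letq x L (C.plug M)

/-- Contextual precongruence `M ≲ N`: for every closing context `C` of type
`Unit` (for both terms), convergence of `C[M]` implies convergence of `C[N]`. -/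
def Prec (M N : Tm) : Prop :=
  ∀ C : Ctx, Closed (C.plug M) .unit → Closed (C.plug N) .unit →
    Conv (C.plug M) → Conv (C.plug N)

/-- Contextual congruence `M ≃ N`, i.e. `≲ ∩ ≲⁻¹`. -/
def Cong (M N : Tm) : Prop := Prec M N ∧ Prec N M

/-- Partial substitutions (used as the two components of a model). -/
def Sub : Type := ℕ → Option Tm
def Sub.remove (ρ : Sub) (x : ℕ) : Sub := fun y => if y = x then none else ρ y
def Sub.update (ρ : Sub) (x : ℕ) (M : Tm) : Sub := fun y => if y = x then some M else ρ y

/-- Simultaneous substitution of (closed) terms for free variables. -/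
def msubst (ρ : Sub) : Tm → Tm
  | .var x => (ρ x).getD (.var x)
  | .cunit => .cunit
  | .cbool b => .cbool b
  | .cint n => .cint n
  | .lam x α M => .lam x α (msubst (ρ.remove x) M)
  | .fix g x α β M => .fix g x α β (msubst ((ρ.remove g).remove x) M)
  | .app M N => .app (msubst ρ M) (msubst ρ N)
  | .add M N => .add (msubst ρ M) (msubst ρ N)
  | .ifte M N N' => .ifte (msubst ρ M) (msubst ρ N) (msubst ρ N')
  | .quote M => .quote (msubst ρ M)
  | .letq x M N => .letq x (msubst ρ M) (msubst (ρ.remove x) N)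

/-- A model of type `Γ; Δ`: `ξ` maps the non-modal variables to closed values of
the right types, `σ` maps the modal variables to closed (possibly diverging)
programs of the right types. -/
structure Model (Γ Δ : Env) : Type where
  ξ : Sub
  σ : Sub
  ξ_dom : ∀ x, (Γ x).isSome ↔ (ξ x).isSome
  ξ_typed : ∀ x α V, Γ x = some α → ξ x = some V → IsValue V ∧ Closed V α
  σ_dom : ∀ x, (Δ x).isSome ↔ (σ x).isSome
  σ_typed : ∀ x α M, Δ x = some α → σ x = some M → Closed M α

/-- The combined substitution `ξ ∪ σ` of a model. -/
def Model.sub {Γ Δ : Env} (η : Model Γ Δ) : Sub :=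
  fun x => match η.ξ x with | some V => some V | none => η.σ x

/-- The closure `Mη` of a term by a model. -/
def Model.close {Γ Δ : Env} (η : Model Γ Δ) (M : Tm) : Tm := msubst η.sub M

/-- Denotation of a variable in a model given as a pair of substitutions. -/
def lookup (ξ σ : Sub) (u : ℕ) : Option Tm :=
  match ξ u with | some V => some V | none => σ u

/-- Formulae of the logic, represented semantically by their satisfaction
predicate on models `(ξ, σ)`. -/
def Form : Type := Sub → Sub → Prop

/-- Semantics of the code-evaluation predicate `⟨u⟩↘m.A`: the denotation of `u`
evaluates to a quasi-quote `⟨M⟩`, `M ⇓ V`, and `A` holds with the modal anchor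
`m` bound to `V`. -/
def CodeEval (u m : ℕ) (A : Form) : Form := fun ξ σ =>
  ∃ U M V, lookup ξ σ u = some U ∧ Evals U (.quote M) ∧ Evals M V ∧ A ξ (σ.update m V)

/-- Validity of the total-correctness judgement `{A} M :_u {B}`
(anchor `u` non-modal). -/
def Valid (Γ Δ : Env) (A : Form) (M : Tm) (u : ℕ) (B : Form) : Prop :=
  ∀ η : Model Γ Δ, A η.ξ η.σ →
    ∃ V, Evals (η.close M) V ∧ B (η.ξ.update u V) η.σ

/-- Validity of a total-correctness judgement whose anchor is placed modally. -/
def ValidM (Γ Δ : Env) (A : Form) (M : Tm) (m : ℕ) (B : Form) : Prop :=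
  ∀ η : Model Γ Δ, A η.ξ η.σ →
    ∃ V, Evals (η.close M) V ∧ B η.ξ (η.σ.update m V)


/-! ### Auxiliary development for Statement 9. -/

/-- A term is substitution-closed: substitution does nothing to it. -/
def SClosed (M : Tm) : Prop := ∀ y (V : Tm), subst y V M = M

lemma subst_pres (x : ℕ) (V : Tm) (hV : SClosed V) :
    ∀ (B : Tm) (y : ℕ) (W : Tm), subst y W B = B →
      subst y W (subst x V B) = subst x V B := by
  intro B
  induction B with
  | var z =>
    intro y W h
    by_cases hz : z = x
    · subst hz; simp only [subst, if_pos rfl]; exact hV y W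
    · simpa [subst, hz] using h
  | cunit => intro y W h; simp [subst]
  | cbool b => intro y W h; simp [subst]
  | cint n => intro y W h; simp [subst]
  | lam z α B ih =>
    intro y W h
    by_cases hz : z = x
    · subst hz; simp only [subst, if_pos rfl]; exact h
    · simp only [subst, if_neg hz]
      by_cases hy : z = y
      · simp [subst, hy]
      · simp only [subst, if_neg hy] at h ⊢
        have hB : subst y W B = B := by injection h
        rw [ih y W hB]
  | fix g z α β B ih =>
    intro y W h
    by_cases hz : g = x ∨ z = x
    · simp only [subst, if_pos hz]; exact h
    · simp only [subst, if_neg hz]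
      by_cases hy : g = y ∨ z = y
      · simp [subst, hy]
      · simp only [subst, if_neg hy] at h ⊢
        have hB : subst y W B = B := by injection h
        rw [ih y W hB]
  | app A B ihA ihB =>
    intro y W h
    simp only [subst] at h ⊢
    have h1 : subst y W A = A := by injection h
    have h2 : subst y W B = B := by injection h
    rw [ihA y W h1, ihB y W h2]
  | add A B ihA ihB =>
    intro y W h
    simp only [subst] at h ⊢
    have h1 : subst y W A = A := by injection h
    have h2 : subst y W B = B := by injection h
    rw [ihA y W h1, ihB y W h2]
  | ifte A B C ihA ihB ihC =>
    intro y W h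
    simp only [subst] at h ⊢
    have h1 : subst y W A = A := by injection h
    have h2 : subst y W B = B := by injection h
    have h3 : subst y W C = C := by injection h
    rw [ihA y W h1, ihB y W h2, ihC y W h3]
  | quote A ihA =>
    intro y W h
    simp only [subst] at h ⊢
    have h1 : subst y W A = A := by injection h
    rw [ihA y W h1]
  | letq z A B ihA ihB =>
    intro y W h
    simp only [subst] at h ⊢
    have h1 : subst y W A = A := by injection h
    rw [ihA y W h1]
    by_cases hy : z = y
    · simp [hy]
    · simp only [if_neg hy] at h ⊢
      have h2 : subst y W B = B := by injection h
      by_cases hz : z = x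
      · simp [hz, h2]
      · simp only [if_neg hz]
        rw [ihB y W h2]

lemma subst_subst_same (x : ℕ) (V : Tm) (hV : SClosed V) :
    ∀ (B : Tm) (W : Tm), subst x W (subst x V B) = subst x V B := by
  intro B
  induction B with
  | var z =>
    intro W
    by_cases hz : z = x
    · subst hz; simp only [subst, if_pos rfl]; exact hV z W
    · simp [subst, hz]
  | cunit => intro W; simp [subst]
  | cbool b => intro W; simp [subst]
  | cint n => intro W; simp [subst]
  | lam z α B ih =>
    intro W
    by_cases hz : z = x
    · simp [subst, hz]
    · simp [subst, hz, ih]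
  | fix g z α β B ih =>
    intro W
    by_cases hz : g = x ∨ z = x
    · simp [subst, hz]
    · simp [subst, hz, ih]
  | app A B ihA ihB => intro W; simp [subst, ihA, ihB]
  | add A B ihA ihB => intro W; simp [subst, ihA, ihB]
  | ifte A B C ihA ihB ihC => intro W; simp [subst, ihA, ihB, ihC]
  | quote A ihA => intro W; simp [subst, ihA]
  | letq z A B ihA ihB =>
    intro W
    by_cases hz : z = x
    · simp [subst, hz, ihA]
    · simp [subst, hz, ihA, ihB]

lemma SClosed_subst {x : ℕ} {V B : Tm} (hV : SClosed V)
    (hB : ∀ y (W : Tm), y ≠ x → subst y W B = B) : SClosed (subst x V B) := by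
  intro y W
  by_cases hy : y = x
  · subst hy; exact subst_subst_same y V hV B W
  · exact subst_pres x V hV B y W (hB y W hy)

lemma SClosed.app {A B : Tm} (h : SClosed (.app A B)) : SClosed A ∧ SClosed B :=
  ⟨fun y V => by have := h y V; simp only [subst] at this; injection this,
   fun y V => by have := h y V; simp only [subst] at this; injection this⟩

lemma SClosed.add {A B : Tm} (h : SClosed (.add A B)) : SClosed A ∧ SClosed B :=
  ⟨fun y V => by have := h y V; simp only [subst] at this; injection this,
   fun y V => by have := h y V; simp only [subst] at this; injection this⟩

lemma SClosed.ifte {A B C : Tm} (h : SClosed (.ifte A B C)) :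
    SClosed A ∧ SClosed B ∧ SClosed C :=
  ⟨fun y V => by have := h y V; simp only [subst] at this; injection this,
   fun y V => by have := h y V; simp only [subst] at this; injection this,
   fun y V => by have := h y V; simp only [subst] at this; injection this⟩

lemma SClosed.lam {x : ℕ} {α : Ty} {B : Tm} (h : SClosed (.lam x α B)) :
    ∀ y (W : Tm), y ≠ x → subst y W B = B := by
  intro y W hy
  have := h y W
  simp only [subst, if_neg (Ne.symm hy)] at this
  injection this

lemma SClosed.fix {g x : ℕ} {α β : Ty} {B : Tm} (h : SClosed (.fix g x α β B)) :
    ∀ y (W : Tm), y ≠ g → y ≠ x → subst y W B = B := by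
  intro y W hyg hyx
  have := h y W
  have hcond : ¬(g = y ∨ x = y) := by
    rintro (rfl | rfl) <;> simp at hyg hyx
  simp only [subst, if_neg hcond] at this
  injection this

lemma SClosed.letq {x : ℕ} {A B : Tm} (h : SClosed (.letq x A B)) :
    SClosed A ∧ ∀ y (W : Tm), y ≠ x → subst y W B = B := by
  constructor
  · intro y V; have := h y V; simp only [subst] at this; injection this
  · intro y W hy
    have := h y W
    simp only [subst, if_neg (Ne.symm hy)] at this
    injection this

lemma SClosed.quote {A : Tm} (h : SClosed (.quote A)) : SClosed A := by
  intro y V; have := h y V; simp only [subst] at this; injection this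

lemma Step_SClosed {M M' : Tm} (hs : Step M M') (h : SClosed M) : SClosed M' := by
  induction hs with
  | @beta x α B V hV =>
    obtain ⟨h1, h2⟩ := h.app
    exact SClosed_subst h2 h1.lam
  | @betaFix g x α β B V hV =>
    obtain ⟨h1, h2⟩ := h.app
    have hB := h1.fix
    have hD : ∀ y (W : Tm), y ≠ x → subst y W (subst g (.fix g x α β B) B)
        = subst g (.fix g x α β B) B := by
      intro y W hyx
      by_cases hyg : y = g
      · subst hyg; exact subst_subst_same y _ h1 B W
      · exact subst_pres g _ h1 B y W (hB y W hyg hyx)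
    exact SClosed_subst h2 hD
  | iteT => exact h.ifte.2.1
  | iteF => exact h.ifte.2.2
  | addC => intro y V; simp [subst]
  | @letqQ x K B =>
    obtain ⟨h1, h2⟩ := h.letq
    exact SClosed_subst h1.quote h2
  | appL _ ih =>
    obtain ⟨h1, h2⟩ := h.app
    intro y V; simp [subst, ih h1 y V, h2 y V]
  | appR _ _ ih =>
    obtain ⟨h1, h2⟩ := h.app
    intro y V; simp [subst, ih h2 y V, h1 y V]
  | addL _ ih =>
    obtain ⟨h1, h2⟩ := h.add
    intro y V; simp [subst, ih h1 y V, h2 y V]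
  | addR _ _ ih =>
    obtain ⟨h1, h2⟩ := h.add
    intro y V; simp [subst, ih h2 y V, h1 y V]
  | ifteC _ ih =>
    obtain ⟨h1, h2, h3⟩ := h.ifte
    intro y V; simp [subst, ih h1 y V, h2 y V, h3 y V]
  | @letqL x A A' B _ ih =>
    obtain ⟨h1, h2⟩ := h.letq
    intro y V
    simp only [subst, ih h1 y V]
    by_cases hy : x = y
    · simp [hy]
    · simp [hy, h2 y V (fun hc => hy hc.symm)]

lemma Steps_SClosed {M M' : Tm} (hs : Steps M M') (h : SClosed M) : SClosed M' := by
  induction hs with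
  | refl => exact h
  | tail _ hstep ih => exact Step_SClosed hstep ih

lemma types_subst_id {Γ Δ : Env} {M : Tm} {α : Ty} (ht : Types Γ Δ M α) :
    ∀ y (V : Tm), Γ y = none → Δ y = none → subst y V M = M := by
  induction ht with
  | @varN Γ Δ x α hx =>
    intro y V hΓ hΔ
    have hxy : x ≠ y := fun h => by subst h; rw [hΓ] at hx; cases hx
    simp [subst, hxy]
  | @varM Γ Δ x α hx =>
    intro y V hΓ hΔ
    have hxy : x ≠ y := fun h => by subst h; rw [hΔ] at hx; cases hx
    simp [subst, hxy]
  | cunit => intro y V _ _; simp [subst]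
  | cbool => intro y V _ _; simp [subst]
  | cint => intro y V _ _; simp [subst]
  | @lam Γ Δ x α β B _ ih =>
    intro y V hΓ hΔ
    by_cases hxy : x = y
    · simp [subst, hxy]
    · have hyx : ¬ y = x := fun h => hxy h.symm
      have : Env.update Γ x α y = none := by simp [Env.update, hyx, hΓ]
      simp [subst, hxy, ih y V this hΔ]
  | @fix Γ Δ g x α β B _ ih =>
    intro y V hΓ hΔ
    by_cases hc : g = y ∨ x = y
    · simp [subst, hc]
    · push_neg at hc
      have : Env.update (Env.update Γ g (.arrow α β)) x α y = none := by
        have hyg : ¬ y = g := fun h => hc.1 h.symm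
        have hyx : ¬ y = x := fun h => hc.2 h.symm
        simp [Env.update, hyg, hyx, hΓ]
      simp only [subst]
      rw [if_neg (by push_neg; exact hc), ih y V this hΔ]
  | app _ _ ih1 ih2 => intro y V hΓ hΔ; simp [subst, ih1 y V hΓ hΔ, ih2 y V hΓ hΔ]
  | add _ _ ih1 ih2 => intro y V hΓ hΔ; simp [subst, ih1 y V hΓ hΔ, ih2 y V hΓ hΔ]
  | ifte _ _ _ ih1 ih2 ih3 =>
    intro y V hΓ hΔ; simp [subst, ih1 y V hΓ hΔ, ih2 y V hΓ hΔ, ih3 y V hΓ hΔ]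
  | quote _ ih => intro y V hΓ hΔ; simp [subst, ih y V rfl hΔ]
  | @letq Γ Δ x A B α β _ _ ih1 ih2 =>
    intro y V hΓ hΔ
    simp only [subst, ih1 y V hΓ hΔ]
    by_cases hxy : x = y
    · simp [hxy]
    · have hyx : ¬ y = x := fun h => hxy h.symm
      have : Env.update Δ x α y = none := by simp [Env.update, hyx, hΔ]
      simp [hxy, ih2 y V hΓ this]

lemma Closed.sclosed {M : Tm} {α : Ty} (h : Closed M α) : SClosed M :=
  fun y V => types_subst_id h y V rfl rfl

/-- `Q` is obtained from `P` by replacing some occurrences of a reduct of `N` by `N'`. -/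
inductive Rel (N N' : Tm) : Tm → Tm → Prop
  | base {P} : Steps N P → Rel N N' P N'
  | var (x) : Rel N N' (.var x) (.var x)
  | cunit : Rel N N' .cunit .cunit
  | cbool (b) : Rel N N' (.cbool b) (.cbool b)
  | cint (n) : Rel N N' (.cint n) (.cint n)
  | lam {M M'} (x α) : Rel N N' M M' → Rel N N' (.lam x α M) (.lam x α M')
  | fix {M M'} (g x α β) : Rel N N' M M' → Rel N N' (.fix g x α β M) (.fix g x α β M')
  | app {A A' B B'} : Rel N N' A A' → Rel N N' B B' → Rel N N' (.app A B) (.app A' B')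
  | add {A A' B B'} : Rel N N' A A' → Rel N N' B B' → Rel N N' (.add A B) (.add A' B')
  | ifte {A A' B B' C C'} : Rel N N' A A' → Rel N N' B B' → Rel N N' C C' →
      Rel N N' (.ifte A B C) (.ifte A' B' C')
  | quote {A A'} : Rel N N' A A' → Rel N N' (.quote A) (.quote A')
  | letq {A A' B B'} (x) : Rel N N' A A' → Rel N N' B B' →
      Rel N N' (.letq x A B) (.letq x A' B')

lemma Rel.refl (N N' : Tm) : ∀ P, Rel N N' P P := by
  intro P
  induction P with
  | var x => exact .var x
  | cunit => exact .cunit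
  | cbool b => exact .cbool b
  | cint n => exact .cint n
  | lam x α M ih => exact .lam x α ih
  | fix g x α β M ih => exact .fix g x α β ih
  | app A B ihA ihB => exact .app ihA ihB
  | add A B ihA ihB => exact .add ihA ihB
  | ifte A B C ihA ihB ihC => exact .ifte ihA ihB ihC
  | quote A ih => exact .quote ih
  | letq x A B ihA ihB => exact .letq x ihA ihB

lemma rel_subst_self (N N' : Tm) (x : ℕ) :
    ∀ M, Rel N N' (subst x N M) (subst x N' M) := by
  intro M
  induction M with
  | var z =>
    by_cases hz : z = x
    · simp only [subst, if_pos hz]; exact .base Relation.ReflTransGen.refl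
    · simp only [subst, if_neg hz]; exact .var z
  | cunit => exact .cunit
  | cbool b => exact .cbool b
  | cint n => exact .cint n
  | lam z α M ih =>
    by_cases hz : z = x
    · simp only [subst, if_pos hz]; exact Rel.refl _ _ _
    · simp only [subst, if_neg hz]; exact .lam z α ih
  | fix g z α β M ih =>
    by_cases hz : g = x ∨ z = x
    · simp only [subst, if_pos hz]; exact Rel.refl _ _ _
    · simp only [subst, if_neg hz]; exact .fix g z α β ih
  | app A B ihA ihB => exact .app ihA ihB
  | add A B ihA ihB => exact .add ihA ihB
  | ifte A B C ihA ihB ihC => exact .ifte ihA ihB ihC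
  | quote A ih => exact .quote ih
  | letq z A B ihA ihB =>
    by_cases hz : z = x
    · simp only [subst, if_pos hz]; exact .letq z ihA (Rel.refl _ _ _)
    · simp only [subst, if_neg hz]; exact .letq z ihA ihB

lemma rel_subst {N N' : Tm} (hN : SClosed N) (hN' : SClosed N') {x : ℕ} :
    ∀ {P Q V W : Tm}, Rel N N' P Q → Rel N N' V W →
      Rel N N' (subst x V P) (subst x W Q) := by
  intro P Q V W hPQ hVW
  induction hPQ with
  | base hsteps =>
    rw [Steps_SClosed hsteps hN x V, hN' x W]
    exact .base hsteps
  | var z =>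
    by_cases hz : z = x
    · simp only [subst, if_pos hz]; exact hVW
    · simp only [subst, if_neg hz]; exact .var z
  | cunit => exact .cunit
  | cbool b => exact .cbool b
  | cint n => exact .cint n
  | lam z α _ ih =>
    by_cases hz : z = x
    · simp only [subst, if_pos hz]; exact .lam z α (by assumption)
    · simp only [subst, if_neg hz]; exact .lam z α ih
  | fix g z α β _ ih =>
    by_cases hz : g = x ∨ z = x
    · simp only [subst, if_pos hz]; exact .fix g z α β (by assumption)
    · simp only [subst, if_neg hz]; exact .fix g z α β ih
  | app _ _ ihA ihB => exact .app ihA ihB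
  | add _ _ ihA ihB => exact .add ihA ihB
  | ifte _ _ _ ihA ihB ihC => exact .ifte ihA ihB ihC
  | quote _ ih => exact .quote ih
  | letq z _ _ ihA ihB =>
    by_cases hz : z = x
    · simp only [subst, if_pos hz]; exact .letq z ihA (by assumption)
    · simp only [subst, if_neg hz]; exact .letq z ihA ihB

lemma rel_value {N N' : Tm} (hdiv : Div N) :
    ∀ {P Q : Tm}, Rel N N' P Q → IsValue P → IsValue Q := by
  intro P Q hPQ hP
  cases hP with
  | cunit =>
    cases hPQ with
    | base hsteps => exact absurd ⟨_, hsteps, .cunit⟩ hdiv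
    | cunit => exact .cunit
  | cbool b =>
    cases hPQ with
    | base hsteps => exact absurd ⟨_, hsteps, .cbool b⟩ hdiv
    | cbool => exact .cbool b
  | cint n =>
    cases hPQ with
    | base hsteps => exact absurd ⟨_, hsteps, .cint n⟩ hdiv
    | cint => exact .cint n
  | lam x α M =>
    cases hPQ with
    | base hsteps => exact absurd ⟨_, hsteps, .lam x α M⟩ hdiv
    | lam => exact .lam _ _ _
  | fix g x α β M =>
    cases hPQ with
    | base hsteps => exact absurd ⟨_, hsteps, .fix g x α β M⟩ hdiv
    | fix => exact .fix _ _ _ _ _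
  | quote M =>
    cases hPQ with
    | base hsteps => exact absurd ⟨_, hsteps, .quote M⟩ hdiv
    | quote => exact .quote _

lemma steps_appL {M M' N : Tm} (h : Steps M M') : Steps (.app M N) (.app M' N) :=
  Relation.ReflTransGen.lift (fun P => Tm.app P N) (fun _ _ hs => Step.appL hs) _ _ h

lemma steps_appR {V N N' : Tm} (hV : IsValue V) (h : Steps N N') :
    Steps (.app V N) (.app V N') :=
  Relation.ReflTransGen.lift (fun P => Tm.app V P) (fun _ _ hs => Step.appR hV hs) _ _ h

lemma steps_addL {M M' N : Tm} (h : Steps M M') : Steps (.add M N) (.add M' N) :=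
  Relation.ReflTransGen.lift (fun P => Tm.add P N) (fun _ _ hs => Step.addL hs) _ _ h

lemma steps_addR {V N N' : Tm} (hV : IsValue V) (h : Steps N N') :
    Steps (.add V N) (.add V N') :=
  Relation.ReflTransGen.lift (fun P => Tm.add V P) (fun _ _ hs => Step.addR hV hs) _ _ h

lemma steps_ifteC {M M' N N' : Tm} (h : Steps M M') :
    Steps (.ifte M N N') (.ifte M' N N') :=
  Relation.ReflTransGen.lift (fun P => Tm.ifte P N N') (fun _ _ hs => Step.ifteC hs) _ _ h

lemma steps_letqL {x : ℕ} {M M' N : Tm} (h : Steps M M') :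
    Steps (.letq x M N) (.letq x M' N) :=
  Relation.ReflTransGen.lift (fun P => Tm.letq x P N) (fun _ _ hs => Step.letqL hs) _ _ h

lemma sim {N N' : Tm} (hdiv : Div N) (hN : SClosed N) (hN' : SClosed N') :
    ∀ {P P' Q : Tm}, Step P P' → Rel N N' P Q →
      ∃ Q', Rel N N' P' Q' ∧ Steps Q Q' := by
  intro P P' Q hstep hrel
  induction hstep generalizing Q with
  | @beta x α B V hV =>
    cases hrel with
    | base hsteps =>
      exact ⟨N', .base (hsteps.tail (.beta hV)), Relation.ReflTransGen.refl⟩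
    | app h1 h2 =>
      cases h1 with
      | base hsteps => exact absurd ⟨_, hsteps, .lam _ _ _⟩ hdiv
      | lam _ _ hB =>
        refine ⟨_, rel_subst hN hN' hB h2, Relation.ReflTransGen.single ?_⟩
        exact .beta (rel_value hdiv h2 hV)
  | @betaFix g x α β B V hV =>
    cases hrel with
    | base hsteps =>
      exact ⟨N', .base (hsteps.tail (.betaFix hV)), Relation.ReflTransGen.refl⟩
    | app h1 h2 =>
      cases h1 with
      | base hsteps => exact absurd ⟨_, hsteps, .fix _ _ _ _ _⟩ hdiv
      | fix _ _ _ _ hB =>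
        refine ⟨_, rel_subst hN hN' (rel_subst hN hN' hB (.fix g x α β hB)) h2,
          Relation.ReflTransGen.single ?_⟩
        exact .betaFix (rel_value hdiv h2 hV)
  | iteT =>
    cases hrel with
    | base hsteps =>
      exact ⟨N', .base (hsteps.tail .iteT), Relation.ReflTransGen.refl⟩
    | ifte h1 h2 h3 =>
      cases h1 with
      | base hsteps => exact absurd ⟨_, hsteps, .cbool true⟩ hdiv
      | cbool => exact ⟨_, h2, Relation.ReflTransGen.single .iteT⟩
  | iteF =>
    cases hrel with
    | base hsteps =>
      exact ⟨N', .base (hsteps.tail .iteF), Relation.ReflTransGen.refl⟩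
    | ifte h1 h2 h3 =>
      cases h1 with
      | base hsteps => exact absurd ⟨_, hsteps, .cbool false⟩ hdiv
      | cbool => exact ⟨_, h3, Relation.ReflTransGen.single .iteF⟩
  | addC =>
    cases hrel with
    | base hsteps =>
      exact ⟨N', .base (hsteps.tail .addC), Relation.ReflTransGen.refl⟩
    | add h1 h2 =>
      cases h1 with
      | base hsteps => exact absurd ⟨_, hsteps, .cint _⟩ hdiv
      | cint =>
        cases h2 with
        | base hsteps => exact absurd ⟨_, hsteps, .cint _⟩ hdiv
        | cint => exact ⟨_, .cint _, Relation.ReflTransGen.single .addC⟩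
  | letqQ =>
    cases hrel with
    | base hsteps =>
      exact ⟨N', .base (hsteps.tail .letqQ), Relation.ReflTransGen.refl⟩
    | letq _ h1 h2 =>
      cases h1 with
      | base hsteps => exact absurd ⟨_, hsteps, .quote _⟩ hdiv
      | quote hK =>
        exact ⟨_, rel_subst hN hN' h2 hK, Relation.ReflTransGen.single .letqQ⟩
  | appL hs ih =>
    cases hrel with
    | base hsteps =>
      exact ⟨N', .base (hsteps.tail (.appL hs)), Relation.ReflTransGen.refl⟩
    | app h1 h2 =>
      obtain ⟨Q1', hrel', hsteps'⟩ := ih h1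
      exact ⟨_, .app hrel' h2, steps_appL hsteps'⟩
  | appR hV hs ih =>
    cases hrel with
    | base hsteps =>
      exact ⟨N', .base (hsteps.tail (.appR hV hs)), Relation.ReflTransGen.refl⟩
    | app h1 h2 =>
      obtain ⟨Q2', hrel', hsteps'⟩ := ih h2
      exact ⟨_, .app h1 hrel', steps_appR (rel_value hdiv h1 hV) hsteps'⟩
  | addL hs ih =>
    cases hrel with
    | base hsteps =>
      exact ⟨N', .base (hsteps.tail (.addL hs)), Relation.ReflTransGen.refl⟩
    | add h1 h2 =>
      obtain ⟨Q1', hrel', hsteps'⟩ := ih h1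
      exact ⟨_, .add hrel' h2, steps_addL hsteps'⟩
  | addR hV hs ih =>
    cases hrel with
    | base hsteps =>
      exact ⟨N', .base (hsteps.tail (.addR hV hs)), Relation.ReflTransGen.refl⟩
    | add h1 h2 =>
      obtain ⟨Q2', hrel', hsteps'⟩ := ih h2
      exact ⟨_, .add h1 hrel', steps_addR (rel_value hdiv h1 hV) hsteps'⟩
  | ifteC hs ih =>
    cases hrel with
    | base hsteps =>
      exact ⟨N', .base (hsteps.tail (.ifteC hs)), Relation.ReflTransGen.refl⟩
    | ifte h1 h2 h3 =>
      obtain ⟨Q1', hrel', hsteps'⟩ := ih h1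
      exact ⟨_, .ifte hrel' h2 h3, steps_ifteC hsteps'⟩
  | letqL hs ih =>
    cases hrel with
    | base hsteps =>
      exact ⟨N', .base (hsteps.tail (.letqL hs)), Relation.ReflTransGen.refl⟩
    | letq _ h1 h2 =>
      obtain ⟨Q1', hrel', hsteps'⟩ := ih h1
      exact ⟨_, .letq _ hrel' h2, steps_letqL hsteps'⟩

lemma sim_steps {N N' : Tm} (hdiv : Div N) (hN : SClosed N) (hN' : SClosed N') :
    ∀ {P P' Q : Tm}, Steps P P' → Rel N N' P Q →
      ∃ Q', Rel N N' P' Q' ∧ Steps Q Q' := by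
  intro P P' Q hsteps hrel
  induction hsteps with
  | refl => exact ⟨Q, hrel, Relation.ReflTransGen.refl⟩
  | tail _ hstep ih =>
    obtain ⟨Q1, hrel1, hsteps1⟩ := ih
    obtain ⟨Q2, hrel2, hsteps2⟩ := sim hdiv hN hN' hstep hrel1
    exact ⟨Q2, hrel2, hsteps1.trans hsteps2⟩

/-- if `M[N/x] ⇓` but `N ⇑` (with `N` closed), then `M[N'/x] ⇓`
for every closed `N'` of the same type. -/
theorem conv_subst_of_div (M N : Tm) (x : ℕ) (α : Ty)
    (hN : Closed N α) (hdiv : Div N) (hconv : Conv (subst x N M)) :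
    ∀ N' : Tm, Closed N' α → Conv (subst x N' M) := by
  intro N' hN'
  obtain ⟨V, hsteps, hval⟩ := hconv
  obtain ⟨Q', hrel, hsteps'⟩ :=
    sim_steps hdiv hN.sclosed hN'.sclosed hsteps (rel_subst_self N N' x M)
  exact ⟨Q', hsteps', rel_value hdiv hrel hval⟩

end PCFdp
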